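/- Let p be a monic real polynomial of degree n, let N_k = Trace(C_p^k) for k ≥ 0 (the k-th Newton sum of the roots of p), and let Newt_p(n) = (N_{i+j})_{0≤i,j≤n−1} ∈ ℝ^{n×n}. Then Newt_p(n)·C_p = C_p^T·Newt_p(n). -/

import Mathlib

open Polynomial Matrix BigOperators Finset

def companion (n : ℕ) (p : Polynomial ℝ) : Matrix (Fin n) (Fin n) ℝ :=
  Matrix.of fun i j =>
    if (j : ℕ) = n - 1 then -p.coeff (i : ℕ)
    else if (i : ℕ) = (j : ℕ) + 1 then 1
    else 0

noncomputable def newtonSum (n : ℕ) (p : Polynomial ℝ) (k : ℕ) : ℝ :=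
  Matrix.trace (companion n p ^ k)

noncomputable def newtMatrix (n : ℕ) (p : Polynomial ℝ) : Matrix (Fin n) (Fin n) ℝ :=
  Matrix.of fun i j : Fin n => newtonSum n p ((i : ℕ) + (j : ℕ))

private lemma matsum_mulVec {n : ℕ} (s : Finset ℕ) (f : ℕ → Matrix (Fin n) (Fin n) ℝ)
    (v : Fin n → ℝ) : (∑ i ∈ s, f i) *ᵥ v = ∑ i ∈ s, f i *ᵥ v := by
  funext r
  simp only [Matrix.mulVec, dotProduct, Matrix.sum_apply, Finset.sum_apply,
    Finset.sum_mul]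
  rw [Finset.sum_comm]

lemma companion_pow_mulVec (n : ℕ) (hn : 0 < n) (p : Polynomial ℝ) :
    ∀ k (hk : k < n), (companion n p) ^ k *ᵥ Pi.single (⟨0, hn⟩ : Fin n) 1
      = Pi.single (⟨k, hk⟩ : Fin n) 1 := by
  intro k
  induction k with
  | zero => intro hk; rw [pow_zero, Matrix.one_mulVec]
  | succ k ih =>
    intro hk
    have hk' : k < n := Nat.lt_of_succ_lt hk
    rw [pow_succ', ← Matrix.mulVec_mulVec, ih hk']
    funext i
    simp only [Matrix.mulVec_single, mul_one]
    have hkne : (k : ℕ) ≠ n - 1 := by omega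
    simp only [companion, Matrix.of_apply, hkne, if_false]
    rw [Pi.single_apply]
    by_cases h : i = (⟨k + 1, hk⟩ : Fin n)
    · simp [h, hkne]
    · have : (i : ℕ) ≠ k + 1 := fun hc => h (Fin.ext hc)
      simp [this, h, hkne]

lemma aeval_companion (n : ℕ) (hn : 0 < n) (p : Polynomial ℝ) (hp : p.Monic)
    (hpdeg : p.natDegree = n) : Polynomial.aeval (companion n p) p = 0 := by
  set C := companion n p with hC
  have e0 := companion_pow_mulVec n hn p
  have key : Polynomial.aeval C p *ᵥ Pi.single (⟨0, hn⟩ : Fin n) 1 = 0 := by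
    rw [Polynomial.aeval_eq_sum_range, hpdeg, matsum_mulVec]
    simp only [Matrix.smul_mulVec]
    rw [Finset.sum_range_succ]
    have hcn : p.coeff n = 1 := by rw [← hpdeg]; exact hp.coeff_natDegree
    have hCn : C ^ n *ᵥ Pi.single (⟨0, hn⟩ : Fin n) 1
        = fun i : Fin n => -p.coeff (i : ℕ) := by
      have h1 : n - 1 < n := Nat.sub_lt hn one_pos
      have hsp : C ^ n = C * C ^ (n - 1) := by
        rw [← pow_succ']; congr 1; omega
      rw [hsp, ← Matrix.mulVec_mulVec, e0 (n-1) h1]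
      funext i
      simp only [Matrix.mulVec_single, mul_one]
      simp [hC, companion]
    rw [hCn, hcn, one_smul]
    funext i
    simp only [Pi.add_apply, Finset.sum_apply, Pi.smul_apply, Pi.zero_apply, smul_eq_mul]
    have hterm : ∀ k ∈ Finset.range n, p.coeff k * (C ^ k *ᵥ Pi.single (⟨0, hn⟩ : Fin n) 1) i
        = if k = (i : ℕ) then p.coeff k else 0 := by
      intro k hk
      rw [e0 k (Finset.mem_range.mp hk), Pi.single_apply]
      by_cases h : i = (⟨k, Finset.mem_range.mp hk⟩ : Fin n)
      · have hk2 : k = (i : ℕ) := by rw [h]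
        rw [if_pos h, if_pos hk2, mul_one]
      · have hne : k ≠ (i : ℕ) := fun hc => h (Fin.ext hc.symm)
        simp [h, hne]
    rw [Finset.sum_congr rfl hterm, Finset.sum_ite_eq' (Finset.range n) (i : ℕ) p.coeff]
    simp [i.isLt]
  have comm : ∀ k : ℕ, Polynomial.aeval C p * C ^ k = C ^ k * Polynomial.aeval C p := by
    intro k
    have h1 : Polynomial.aeval C (p * Polynomial.X ^ k)
        = Polynomial.aeval C (Polynomial.X ^ k * p) := by rw [mul_comm]
    simpa using h1
  ext i j
  have hj : (j : ℕ) < n := j.isLt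
  have hsingle : Pi.single j (1 : ℝ) = C ^ (j : ℕ) *ᵥ Pi.single (⟨0, hn⟩ : Fin n) 1 := by
    rw [e0 (j : ℕ) hj]
  have hz : Polynomial.aeval C p *ᵥ Pi.single j 1 = 0 := by
    rw [hsingle, Matrix.mulVec_mulVec, comm, ← Matrix.mulVec_mulVec, key, Matrix.mulVec_zero]
  simpa using congrFun hz i

lemma newton_rec (n : ℕ) (hn : 0 < n) (p : Polynomial ℝ) (hp : p.Monic)
    (hpdeg : p.natDegree = n) (m : ℕ) :
    newtonSum n p (m + n) = -∑ k ∈ Finset.range n, p.coeff k * newtonSum n p (m + k) := by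
  set C := companion n p with hC
  have h0 : Matrix.trace (C ^ m * Polynomial.aeval C p) = 0 := by
    rw [aeval_companion n hn p hp hpdeg, mul_zero, Matrix.trace_zero]
  rw [Polynomial.aeval_eq_sum_range, hpdeg, Finset.mul_sum] at h0
  have hterm : ∀ i : ℕ, C ^ m * (p.coeff i • C ^ i) = p.coeff i • C ^ (m + i) := by
    intro i; rw [mul_smul_comm, ← pow_add]
  simp_rw [hterm] at h0
  rw [Matrix.trace_sum] at h0
  simp only [Matrix.trace_smul, smul_eq_mul] at h0
  have hcn : p.coeff n = 1 := by rw [← hpdeg]; exact hp.coeff_natDegree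
  rw [Finset.sum_range_succ, hcn, one_mul] at h0
  have hN : ∀ k, Matrix.trace (C ^ (m + k)) = newtonSum n p (m + k) := fun k => rfl
  simp_rw [hN] at h0
  linarith [h0]

lemma mul_entry (n : ℕ) (hn : 0 < n) (p : Polynomial ℝ) (hp : p.Monic)
    (hpdeg : p.natDegree = n) (i j : Fin n) :
    (newtMatrix n p * companion n p) i j = newtonSum n p ((i : ℕ) + (j : ℕ) + 1) := by
  rw [Matrix.mul_apply]
  by_cases hjn : (j : ℕ) = n - 1
  · have hterm : ∀ k : Fin n, newtMatrix n p i k * companion n p k j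
        = -(p.coeff (k : ℕ) * newtonSum n p ((i : ℕ) + (k : ℕ))) := by
      intro k
      simp only [newtMatrix, companion, Matrix.of_apply, hjn, if_true]
      ring
    rw [Finset.sum_congr rfl (fun k _ => hterm k)]
    have h1 : ∑ k : Fin n, -(p.coeff (k : ℕ) * newtonSum n p ((i : ℕ) + (k : ℕ)))
        = -∑ k ∈ Finset.range n, p.coeff k * newtonSum n p ((i : ℕ) + k) := by
      rw [← Fin.sum_univ_eq_sum_range (fun k => p.coeff k * newtonSum n p ((i : ℕ) + k)) n]
      exact Finset.sum_neg_distrib (f := fun k : Fin n => p.coeff (k : ℕ) * newtonSum n p ((i : ℕ) + (k : ℕ)))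
    rw [h1, ← newton_rec n hn p hp hpdeg (i : ℕ)]
    congr 1
    omega
  · have hj1 : (j : ℕ) + 1 < n := by have := j.isLt; omega
    rw [Finset.sum_eq_single (⟨(j : ℕ) + 1, hj1⟩ : Fin n)]
    · simp only [newtMatrix, companion, Matrix.of_apply, hjn, if_false, if_pos rfl, if_true,
        mul_one]
      exact congrArg (newtonSum n p) (by omega)
    · intro k _ hk
      have hne : (k : ℕ) ≠ (j : ℕ) + 1 := fun hc => hk (Fin.ext hc)
      simp [newtMatrix, companion, hjn, hne]
    · intro h; exact absurd (Finset.mem_univ _) h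

theorem stmt_9 (n : ℕ) (p : Polynomial ℝ) (hp : p.Monic) (hpdeg : p.natDegree = n) :
    newtMatrix n p * companion n p = (companion n p)ᵀ * newtMatrix n p := by
  rcases Nat.eq_zero_or_pos n with hn | hn
  · subst hn; ext i j; exact i.elim0
  · ext i j
    have R : ((companion n p)ᵀ * newtMatrix n p) i j
        = (newtMatrix n p * companion n p) j i := by
      rw [Matrix.mul_apply, Matrix.mul_apply]
      refine Finset.sum_congr rfl fun k _ => ?_
      simp only [Matrix.transpose_apply, newtMatrix, Matrix.of_apply]
      rw [Nat.add_comm (k : ℕ) (j : ℕ)]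
      ring
    rw [mul_entry n hn p hp hpdeg i j, R, mul_entry n hn p hp hpdeg j i]
    congr 1
    omega
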